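/- There is a constant c > 0 such that the following holds. Let K be a field, let n ≥ 1, let ε ∈ (0,1), and let v₁,…,vₙ, w₁,…,wₙ, θ ∈ ℝ. Define the linear threshold function f : {0,1}^n × {0,1}^n → {0,1} by f(x,y) = 1 if Σᵢ vᵢxᵢ + Σᵢ wᵢyᵢ ≥ θ and f(x,y) = 0 otherwise. Then the 2^n × 2^n truth table matrix M_f, whose entries are the elements 0, 1 of K, has ε-probabilistic rank at most c·n²/ε over K. -/

import Mathlib

open scoped Classical
open Finset

noncomputable section

def ip {n : ℕ} (x y : Fin n → Bool) : ℕ :=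
  (Finset.univ.filter (fun i => x i ∧ y i)).card

def wt {n : ℕ} (x : Fin n → Bool) : ℕ :=
  (Finset.univ.filter (fun i => x i)).card

def Had (K : Type) [Field K] (n : ℕ) : Matrix (Fin n → Bool) (Fin n → Bool) K :=
  Matrix.of fun x y => (-1 : K) ^ ip x y

def diffCount {n : ℕ} {K : Type} [Field K]
    (A B : Matrix (Fin n → Bool) (Fin n → Bool) K) : ℕ :=
  Nat.card {p : (Fin n → Bool) × (Fin n → Bool) // A p.1 p.2 ≠ B p.1 p.2}

def ProbRankLE {n : ℕ} {K : Type} [Field K]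
    (A : Matrix (Fin n → Bool) (Fin n → Bool) K) (ε r : ℝ) : Prop :=
  ∃ (s : Finset (Matrix (Fin n → Bool) (Fin n → Bool) K))
    (w : Matrix (Fin n → Bool) (Fin n → Bool) K → ℝ),
    (∀ M ∈ s, 0 ≤ w M) ∧ (∑ M ∈ s, w M) = 1 ∧
    (∀ M ∈ s, ((M.rank : ℝ)) ≤ r) ∧
    ∀ x y : Fin n → Bool, 1 - ε ≤ ∑ M ∈ s, (if M x y = A x y then w M else 0)


lemma matrix_rank_add_le {X Y : Type} [Fintype X] [Fintype Y] {K : Type} [Field K]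
    (A B : Matrix X Y K) : (A + B).rank ≤ A.rank + B.rank := by
  have h : LinearMap.range (A + B).mulVecLin ≤
      LinearMap.range A.mulVecLin ⊔ LinearMap.range B.mulVecLin := by
    rintro _ ⟨x, rfl⟩
    simp only [Matrix.mulVecLin_apply, Matrix.add_mulVec]
    exact Submodule.add_mem_sup ⟨x, rfl⟩ ⟨x, rfl⟩
  calc (A + B).rank ≤ Module.finrank K
        (LinearMap.range A.mulVecLin ⊔ LinearMap.range B.mulVecLin : Submodule K (X → K)) :=
        Submodule.finrank_mono h
    _ ≤ A.rank + B.rank := Submodule.finrank_add_le_finrank_add_finrank _ _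

lemma matrix_rank_sum_le {X Y : Type} [Fintype X] [Fintype Y] {K : Type} [Field K]
    (t : Finset ℕ) (M : ℕ → Matrix X Y K) :
    (∑ s ∈ t, M s).rank ≤ ∑ s ∈ t, (M s).rank := by
  classical
  induction t using Finset.induction with
  | empty => simp [Matrix.rank_zero]
  | insert a s h ih =>
    rw [Finset.sum_insert h, Finset.sum_insert h]
    exact le_trans (matrix_rank_add_le _ _) (by omega)

lemma card_hash_collision {D : Type} [Fintype D] [DecidableEq D] (m : ℕ) {a b : D} (hab : a ≠ b) :
    (Finset.univ.filter (fun H : D → Fin m => H a = H b)).card = m ^ (Fintype.card D - 1) := by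
  classical
  have e : {H : D → Fin m // H a = H b} ≃ ({d : D // d ≠ a} → Fin m) :=
    { toFun := fun H d => H.1 d.1
      invFun := fun g => ⟨fun d => if h : d = a then g ⟨b, hab.symm⟩ else g ⟨d, h⟩, by
        simp [hab.symm]⟩
      left_inv := fun H => by
        apply Subtype.ext; funext d
        show (if h : d = a then H.1 b else H.1 d) = H.1 d
        by_cases h : d = a
        · subst h; simp [H.2.symm]
        · simp [h]
      right_inv := fun g => by
        funext d
        simp [d.2] }
  have h1 : (Finset.univ.filter (fun H : D → Fin m => H a = H b)).card
      = Fintype.card {H : D → Fin m // H a = H b} := (Fintype.card_subtype _).symm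
  rw [h1, Fintype.card_congr e, Fintype.card_fun, Fintype.card_fin]
  congr 1
  have := Fintype.card_subtype_compl (fun d : D => d = a)
  rw [Fintype.card_subtype_eq] at this
  rw [this]

lemma bit_sum_identity (K : Type) [Field K] (L i j : ℕ) (hi : i < 2^L) (hj : j < 2^L) :
    ∑ s ∈ Finset.range (L+1),
      ((if i >>> s = j >>> s then (1:K) else 0) *
       ((if s = 0 then (1:K) else if Nat.testBit i (s-1) then 1 else 0) *
        (if s = 0 then (1:K) else if Nat.testBit j (s-1) then 0 else 1))) =
    (if j ≤ i then (1:K) else 0) := by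
  by_cases hij : i = j
  · subst hij
    rw [if_pos le_rfl]
    rw [Finset.sum_eq_single_of_mem 0 (Finset.mem_range.2 (Nat.succ_pos L))]
    · simp
    · intro b _ hb
      by_cases hbit : Nat.testBit i (b-1) <;> simp [hb, hbit]
  · have hd : i ^^^ j ≠ 0 := fun h => hij (by have := congrArg (· ^^^ j) h; simpa [Nat.xor_assoc] using this)
    obtain ⟨k, hk, hmax⟩ := Nat.exists_most_significant_bit hd
    have hkdiff : Nat.testBit i k ≠ Nat.testBit j k := by
      intro h
      simp [Nat.testBit_xor, h] at hk
    have hagree : ∀ t, k < t → Nat.testBit i t = Nat.testBit j t := by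
      intro t ht
      have h2 := hmax t ht
      rw [Nat.testBit_xor] at h2
      cases h3 : Nat.testBit i t <;> cases h4 : Nat.testBit j t <;>
        simp [h3, h4] at h2 ⊢
    have hkL : k < L := by
      by_contra hkk
      have : (i ^^^ j) < 2 ^ k :=
        lt_of_lt_of_le (Nat.xor_lt_two_pow hi hj) (Nat.pow_le_pow_right (by norm_num) (by omega))
      rw [Nat.testBit_lt_two_pow this] at hk
      exact Bool.false_ne_true hk
    have hshift_eq : ∀ s, k < s → i >>> s = j >>> s := by
      intro s hs
      apply Nat.eq_of_testBit_eq
      intro t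
      simp only [Nat.testBit_shiftRight]
      exact hagree (s + t) (by omega)
    have hshift_ne : ∀ s, s ≤ k → i >>> s ≠ j >>> s := by
      intro s hs heq
      apply hkdiff
      have := congrArg (fun z => Nat.testBit z (k - s)) heq
      simpa [Nat.testBit_shiftRight, Nat.add_sub_cancel' hs] using this
    by_cases hbit : Nat.testBit i k
    · have hjk : Nat.testBit j k = false := by
        cases h : Nat.testBit j k
        · rfl
        · exact absurd (hbit.trans h.symm) hkdiff
      have hij2 : j < i := Nat.lt_of_testBit k hjk hbit (fun t ht => (hagree t ht).symm)
      rw [if_pos hij2.le]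
      rw [Finset.sum_eq_single_of_mem (k+1) (Finset.mem_range.2 (by omega))]
      · simp [hshift_eq (k+1) (Nat.lt_succ_self k), hbit, hjk]
      · intro b hb hbk
        rcases Nat.eq_zero_or_pos b with rfl | hb1
        · simp [hij]
        · rcases le_or_gt b k with hble | hbgt
          · simp [hshift_ne b hble]
          · have hb2 : k < b - 1 := by omega
            have := hagree (b-1) hb2
            by_cases h3 : Nat.testBit i (b-1)
            · simp [Nat.pos_iff_ne_zero.1 hb1, h3, this ▸ h3]
            · simp [Nat.pos_iff_ne_zero.1 hb1, h3]
    · have hbi : Nat.testBit i k = false := by simpa using hbit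
      have hjk : Nat.testBit j k = true := by
        cases h : Nat.testBit j k
        · exact absurd (hbi.trans h.symm) hkdiff
        · rfl
      have hij2 : i < j := Nat.lt_of_testBit k hbi hjk hagree
      rw [if_neg (by omega)]
      apply Finset.sum_eq_zero
      intro b hb
      rcases Nat.eq_zero_or_pos b with rfl | hb1
      · simp [hij]
      · rcases le_or_gt b k with hble | hbgt
        · simp [hshift_ne b hble]
        · rcases Nat.lt_or_ge b (k+2) with hb2 | hb2
          · have hbk : b = k + 1 := by omega
            subst hbk
            simp [hbi]
          · have hb3 : k < b - 1 := by omega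
            have := hagree (b-1) hb3
            by_cases h3 : Nat.testBit i (b-1)
            · simp [Nat.pos_iff_ne_zero.1 hb1, h3, this ▸ h3]
            · simp [Nat.pos_iff_ne_zero.1 hb1, h3]

lemma sum_if_mul_if {β K : Type} [Fintype β] [DecidableEq β] [Field K] (h1 h2 : β) (a b : K) :
    ∑ c : β, (if h1 = c then a else 0) * (if h2 = c then b else 0)
      = if h1 = h2 then a * b else 0 := by
  rw [Finset.sum_eq_single h1]
  · by_cases h : h1 = h2 <;> simp [h, eq_comm]
  · intro c _ hc
    simp [Ne.symm hc]
  · simp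

lemma rank_prod_le {X : Type} [Fintype X] {K : Type} [Field K] (m : ℕ)
    (B : Matrix X (Fin m) K) (C : Matrix (Fin m) X K) : (B * C).rank ≤ m :=
  le_trans (Matrix.rank_mul_le_left _ _) (by simpa using Matrix.rank_le_card_width B)


set_option maxHeartbeats 1200000 in
/-- Every linear threshold function has probabilistic rank O(n²/ε). -/
theorem ltf_probRank :
    ∃ c : ℝ, 0 < c ∧
      ∀ (K : Type) [Field K], ∀ n : ℕ, 1 ≤ n → ∀ ε : ℝ, 0 < ε → ε < 1 →
        ∀ (v w : Fin n → ℝ) (θ : ℝ),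
          ProbRankLE
            (Matrix.of fun x y : Fin n → Bool =>
              if θ ≤ (∑ i, v i * (if x i then (1 : ℝ) else 0)) +
                     (∑ i, w i * (if y i then (1 : ℝ) else 0))
              then (1 : K) else 0)
            ε (c * n ^ 2 / ε) := by
  refine ⟨20, by norm_num, ?_⟩
  intro K _ n hn ε hε hε1 v w θ
  -- value functions
  set u : (Fin n → Bool) → ℝ := fun x => ∑ i, v i * (if x i then (1:ℝ) else 0) with hu
  set tv : (Fin n → Bool) → ℝ := fun y => θ - ∑ i, w i * (if y i then (1:ℝ) else 0) with htv
  set V : Finset ℝ := (Finset.univ.image u) ∪ (Finset.univ.image tv) with hV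
  set rnk : ℝ → ℕ := fun a => (V.filter (fun z => z ≤ a)).card with hrnk
  set L : ℕ := n + 2 with hLdef
  set ii : (Fin n → Bool) → ℕ := fun x => rnk (u x) with hii
  set jj : (Fin n → Bool) → ℕ := fun y => rnk (tv y) with hjj
  -- bounds on ranks
  have hVcard : V.card ≤ 2^(n+1) := by
    calc V.card ≤ (Finset.univ.image u).card + (Finset.univ.image tv).card :=
          Finset.card_union_le _ _
      _ ≤ Fintype.card (Fin n → Bool) + Fintype.card (Fin n → Bool) := by
          gcongr <;> exact le_trans (Finset.card_image_le) (le_of_eq (Finset.card_univ))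
      _ = 2^(n+1) := by simp [Fintype.card_fun]; ring
  have hrnk_lt : ∀ a : ℝ, rnk a < 2^L := by
    intro a
    calc rnk a ≤ V.card := Finset.card_filter_le _ _
      _ < 2^L := by rw [hLdef]; calc V.card ≤ 2^(n+1) := hVcard
                                  _ < 2^(n+2) := by exact Nat.pow_lt_pow_right (by norm_num) (by omega)
  -- order embedding
  have hord : ∀ x y, (tv y ≤ u x ↔ jj y ≤ ii x) := by
    intro x y
    constructor
    · intro h
      apply Finset.card_le_card
      intro z hz
      rw [Finset.mem_filter] at hz ⊢
      exact ⟨hz.1, le_trans hz.2 h⟩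
    · intro h
      by_contra hc
      push_neg at hc
      have hss : V.filter (fun z => z ≤ u x) ⊂ V.filter (fun z => z ≤ tv y) := by
        rw [Finset.ssubset_iff_of_subset]
        · refine ⟨tv y, ?_, ?_⟩
          · rw [Finset.mem_filter]
            exact ⟨Finset.mem_union_right _ (Finset.mem_image_of_mem tv (Finset.mem_univ y)), le_rfl⟩
          · rw [Finset.mem_filter]
            push_neg
            intro _
            exact hc
        · intro z hz
          rw [Finset.mem_filter] at hz ⊢
          exact ⟨hz.1, le_trans hz.2 hc.le⟩
      have h2 : ii x < jj y := Finset.card_lt_card hss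
      omega
  -- hash parameters
  set m : ℕ := ⌈((L:ℝ)+1)/ε⌉₊ with hmdef
  have hm1 : 1 ≤ m := Nat.ceil_pos.2 (by positivity)
  have hmge : ((L:ℝ)+1)/ε ≤ (m:ℝ) := Nat.le_ceil _
  have h2L : 0 < 2^L := pow_pos (by norm_num) L
  set D := (Fin (L+1)) × (Fin (2^L)) with hDdef
  set kf : ℕ → ℕ → D := fun s i =>
    (⟨s % (L+1), Nat.mod_lt _ (by omega)⟩, ⟨(i >>> s) % 2^L, Nat.mod_lt _ h2L⟩) with hkf
  set MH : (D → Fin m) → Matrix (Fin n → Bool) (Fin n → Bool) K := fun H =>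
    ∑ s ∈ Finset.range (L+1),
      (Matrix.of fun x c => if H (kf s (ii x)) = c then
          (if s = 0 then (1:K) else if Nat.testBit (ii x) (s-1) then 1 else 0) else 0) *
      (Matrix.of fun c y => if H (kf s (jj y)) = c then
          (if s = 0 then (1:K) else if Nat.testBit (jj y) (s-1) then 0 else 1) else 0) with hMH
  set p : ℝ := ((Fintype.card (D → Fin m) : ℝ))⁻¹ with hpdef
  have hcard : Fintype.card (D → Fin m) = m ^ Fintype.card D := by
    rw [Fintype.card_fun, Fintype.card_fin]
  have hdpos : 0 < Fintype.card D := by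
    have : Nonempty D := ⟨(⟨0, by omega⟩, ⟨0, h2L⟩)⟩
    exact Fintype.card_pos
  have hΩpos : 0 < Fintype.card (D → Fin m) := by
    rw [hcard]
    exact pow_pos (by omega) _
  have hppos : 0 < p := by
    rw [hpdef]
    exact inv_pos.2 (by exact_mod_cast hΩpos)
  have hentry : ∀ (H : D → Fin m) x y, MH H x y =
      ∑ s ∈ Finset.range (L+1),
        (if H (kf s (ii x)) = H (kf s (jj y)) then
          (if s = 0 then (1:K) else if Nat.testBit (ii x) (s-1) then 1 else 0) *
          (if s = 0 then (1:K) else if Nat.testBit (jj y) (s-1) then 0 else 1) else 0) := by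
    intro H x y
    simp only [hMH]
    rw [Matrix.sum_apply]
    refine Finset.sum_congr rfl fun s _ => ?_
    rw [Matrix.mul_apply]
    simpa using sum_if_mul_if (H (kf s (ii x))) (H (kf s (jj y)))
      (if s = 0 then (1:K) else if Nat.testBit (ii x) (s-1) then 1 else 0)
      (if s = 0 then (1:K) else if Nat.testBit (jj y) (s-1) then 0 else 1)
  have hshift_lt : ∀ (a s : ℕ), a < 2^L → a >>> s < 2^L := by
    intro a s ha
    calc a >>> s ≤ a := by
          rw [Nat.shiftRight_eq_div_pow]; exact Nat.div_le_self _ _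
      _ < 2^L := ha
  have hkf_ne : ∀ (s a b : ℕ), s ≤ L → a < 2^L → b < 2^L → a >>> s ≠ b >>> s →
      kf s a ≠ kf s b := by
    intro s a b hs ha hb hne hkeq
    apply hne
    have := congrArg (fun z : D => (z.2 : ℕ)) hkeq
    simpa [hkf, Nat.mod_eq_of_lt (hshift_lt a s ha), Nat.mod_eq_of_lt (hshift_lt b s hb)]
      using this
  have hgood : ∀ (H : D → Fin m) x y,
      (∀ s, s ≤ L → ii x >>> s ≠ jj y >>> s → H (kf s (ii x)) ≠ H (kf s (jj y))) →
      MH H x y = (if jj y ≤ ii x then (1:K) else 0) := by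
    intro H x y hg
    rw [hentry H x y, ← bit_sum_identity K L (ii x) (jj y) (hrnk_lt _) (hrnk_lt _)]
    refine Finset.sum_congr rfl fun s hs => ?_
    have hsL : s ≤ L := by have := Finset.mem_range.1 hs; omega
    by_cases hsh : ii x >>> s = jj y >>> s
    · have hk : kf s (ii x) = kf s (jj y) := by
        simp only [hkf, hsh]
      rw [if_pos (congrArg H hk), if_pos hsh, one_mul]
    · rw [if_neg (hg s hsL hsh), if_neg hsh, zero_mul]
  -- provide the distribution
  unfold ProbRankLE
  refine ⟨Finset.image MH Finset.univ,
    fun M => ((Finset.univ.filter (fun H => MH H = M)).card : ℝ) * p, ?_, ?_, ?_, ?_⟩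
  · intro M _
    exact mul_nonneg (Nat.cast_nonneg _) hppos.le
  · rw [← Finset.sum_mul]
    rw [show (∑ M ∈ Finset.image MH Finset.univ,
        ((Finset.univ.filter (fun H => MH H = M)).card : ℝ))
        = ((∑ M ∈ Finset.image MH Finset.univ,
            (Finset.univ.filter (fun H => MH H = M)).card : ℕ) : ℝ) from (Nat.cast_sum _ _).symm]
    rw [← Finset.card_eq_sum_card_image MH Finset.univ]
    rw [Finset.card_univ, hpdef]
    exact mul_inv_cancel₀ (by exact_mod_cast hΩpos.ne')
  · intro M hM
    obtain ⟨H, -, rfl⟩ := Finset.mem_image.1 hM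
    have h1 : (MH H).rank ≤ (L+1) * m := by
      simp only [hMH]
      refine le_trans (matrix_rank_sum_le _ _)
        (le_trans (Finset.sum_le_sum (fun s _ => rank_prod_le m _ _)) ?_)
      simp [Finset.sum_const, Finset.card_range]
    have hm2 : (m:ℝ) ≤ ((L:ℝ)+1)/ε + 1 := (Nat.ceil_lt_add_one (by positivity)).le
    have hn1 : (1:ℝ) ≤ (n:ℝ) := by exact_mod_cast hn
    have hLc : (L:ℝ) = (n:ℝ) + 2 := by rw [hLdef]; push_cast; ring
    calc ((MH H).rank : ℝ) ≤ (((L+1) * m : ℕ) : ℝ) := Nat.cast_le.mpr h1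
      _ ≤ 20 * (n:ℝ)^2 / ε := by
          rw [le_div_iff₀ hε]
          push_cast
          have hm3 : (m:ℝ) * ε ≤ ((L:ℝ)+1) + ε := by
            have h4 : (((L:ℝ)+1)/ε + 1) * ε = ((L:ℝ)+1) + ε := by field_simp
            nlinarith
          have h5 : (0:ℝ) ≤ (L:ℝ)+1 := by positivity
          nlinarith [mul_le_mul_of_nonneg_left hm3 h5, sq_nonneg ((n:ℝ)-1),
            mul_le_mul_of_nonneg_left hn1 (le_trans zero_le_one hn1)]
  · intro x y
    simp only [Matrix.of_apply]
    have hval : (if θ ≤ (∑ i, v i * (if x i then (1:ℝ) else 0)) +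
          (∑ i, w i * (if y i then (1:ℝ) else 0)) then (1:K) else 0)
        = (if jj y ≤ ii x then (1:K) else 0) := by
      refine if_congr ?_ rfl rfl
      rw [← hord x y, htv]
      exact sub_le_iff_le_add.symm
    simp only [hval]
    have hstepA : ∑ M ∈ Finset.image MH Finset.univ,
        (if M x y = (if jj y ≤ ii x then (1:K) else 0) then
          ((Finset.univ.filter (fun H => MH H = M)).card : ℝ) * p else 0)
        = ∑ H : D → Fin m, (if MH H x y = (if jj y ≤ ii x then (1:K) else 0) then p else 0) := by
      rw [← Finset.sum_fiberwise_of_maps_to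
        (fun H _ => Finset.mem_image_of_mem MH (Finset.mem_univ H))
        (fun H => if MH H x y = (if jj y ≤ ii x then (1:K) else 0) then p else 0)]
      refine Finset.sum_congr rfl fun M hM => ?_
      by_cases hMA : M x y = (if jj y ≤ ii x then (1:K) else 0)
      · rw [if_pos hMA]
        rw [Finset.sum_congr rfl (fun H hH =>
          if_pos (by rw [(Finset.mem_filter.1 hH).2]; exact hMA))]
        rw [Finset.sum_const, nsmul_eq_mul]
      · rw [if_neg hMA]
        rw [Finset.sum_congr rfl (fun H hH =>
          if_neg (by rw [(Finset.mem_filter.1 hH).2]; exact hMA))]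
        simp
    rw [hstepA]
    have hstepB : ∑ H : D → Fin m,
        (if (∀ s, s ≤ L → ii x >>> s ≠ jj y >>> s →
            H (kf s (ii x)) ≠ H (kf s (jj y))) then p else 0)
        ≤ ∑ H : D → Fin m, (if MH H x y = (if jj y ≤ ii x then (1:K) else 0) then p else 0) := by
      refine Finset.sum_le_sum fun H _ => ?_
      by_cases hG : (∀ s, s ≤ L → ii x >>> s ≠ jj y >>> s →
          H (kf s (ii x)) ≠ H (kf s (jj y)))
      · rw [if_pos hG, if_pos (hgood H x y hG)]
      · rw [if_neg hG]
        by_cases h2 : MH H x y = (if jj y ≤ ii x then (1:K) else 0)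
        · rw [if_pos h2]; exact hppos.le
        · rw [if_neg h2]
    refine le_trans ?_ hstepB
    -- count good hash functions
    rw [← Finset.sum_filter, Finset.sum_const, nsmul_eq_mul]
    set GoodS := Finset.univ.filter (fun H : D → Fin m => ∀ s, s ≤ L →
      ii x >>> s ≠ jj y >>> s → H (kf s (ii x)) ≠ H (kf s (jj y))) with hGoodS
    set BadS := Finset.univ.filter (fun H : D → Fin m => ¬ (∀ s, s ≤ L →
      ii x >>> s ≠ jj y >>> s → H (kf s (ii x)) ≠ H (kf s (jj y)))) with hBadS
    have hGB : GoodS.card + BadS.card = m ^ Fintype.card D := by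
      rw [hGoodS, hBadS, Finset.card_filter_add_card_filter_not,
        Finset.card_univ, hcard]
    have hbad : BadS.card ≤ (L+1) * m ^ (Fintype.card D - 1) := by
      have hsub : BadS ⊆ (Finset.range (L+1)).biUnion (fun s =>
          Finset.univ.filter (fun H : D → Fin m =>
            ii x >>> s ≠ jj y >>> s ∧ H (kf s (ii x)) = H (kf s (jj y)))) := by
        intro H hH
        rw [hBadS, Finset.mem_filter] at hH
        have hH2 := hH.2
        push_neg at hH2
        obtain ⟨s, hs1, hs2, hs3⟩ := hH2
        exact Finset.mem_biUnion.2 ⟨s, Finset.mem_range.2 (by omega),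
          Finset.mem_filter.2 ⟨Finset.mem_univ _, hs2, hs3⟩⟩
      have hub : ∀ s ∈ Finset.range (L+1),
          (Finset.univ.filter (fun H : D → Fin m =>
            ii x >>> s ≠ jj y >>> s ∧ H (kf s (ii x)) = H (kf s (jj y)))).card
          ≤ m ^ (Fintype.card D - 1) := by
        intro s hs
        by_cases hsh : ii x >>> s = jj y >>> s
        · rw [Finset.filter_false_of_mem (fun H _ => by simp [hsh])]
          exact Nat.zero_le _
        · have hne := hkf_ne s (ii x) (jj y)
            (by have := Finset.mem_range.1 hs; omega) (hrnk_lt _) (hrnk_lt _) hsh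
          calc (Finset.univ.filter (fun H : D → Fin m =>
                ii x >>> s ≠ jj y >>> s ∧ H (kf s (ii x)) = H (kf s (jj y)))).card
              ≤ (Finset.univ.filter (fun H : D → Fin m =>
                H (kf s (ii x)) = H (kf s (jj y)))).card :=
                Finset.card_le_card (fun H hH => Finset.mem_filter.2
                  ⟨Finset.mem_univ _, (Finset.mem_filter.1 hH).2.2⟩)
            _ = m ^ (Fintype.card D - 1) := card_hash_collision m hne
      refine le_trans (Finset.card_le_card hsub)
        (le_trans Finset.card_biUnion_le (le_trans (Finset.sum_le_sum hub) ?_))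
      simp [Finset.sum_const, Finset.card_range]
    -- final arithmetic
    have hmpos : (0:ℝ) < (m:ℝ) := by exact_mod_cast hm1
    have hd1 : (m:ℝ) ^ Fintype.card D = (m:ℝ) ^ (Fintype.card D - 1) * m := by
      rw [← pow_succ]
      congr 1
      omega
    have hGc : ((m:ℝ)^(Fintype.card D) - ((L:ℝ)+1) * (m:ℝ)^(Fintype.card D - 1))
        ≤ (GoodS.card : ℝ) := by
      have h2 : (GoodS.card : ℝ) + (BadS.card : ℝ) = (m:ℝ)^(Fintype.card D) := by
        exact_mod_cast hGB
      have h3 : (BadS.card : ℝ) ≤ ((L:ℝ)+1) * (m:ℝ)^(Fintype.card D - 1) := by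
        exact_mod_cast hbad
      linarith
    have hpeq : p = ((m:ℝ)^(Fintype.card D))⁻¹ := by
      rw [hpdef, hcard]
      push_cast
      rfl
    have hLm : ((L:ℝ)+1) / m ≤ ε := by
      rw [div_le_iff₀ hmpos]
      have h6 := (div_le_iff₀ hε).1 hmge
      linarith
    have hmd : (0:ℝ) < (m:ℝ)^(Fintype.card D) := by positivity
    have hmd1 : (0:ℝ) < (m:ℝ)^(Fintype.card D - 1) := by positivity
    have hkey : (1:ℝ) - ε ≤ ((m:ℝ)^(Fintype.card D) - ((L:ℝ)+1) * (m:ℝ)^(Fintype.card D - 1))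
        * ((m:ℝ)^(Fintype.card D))⁻¹ := by
      have heq : ((m:ℝ)^(Fintype.card D) - ((L:ℝ)+1) * (m:ℝ)^(Fintype.card D - 1))
          * ((m:ℝ)^(Fintype.card D))⁻¹ = 1 - ((L:ℝ)+1)/m := by
        rw [hd1]
        field_simp
      rw [heq]
      linarith
    calc (1:ℝ) - ε ≤ ((m:ℝ)^(Fintype.card D) - ((L:ℝ)+1) * (m:ℝ)^(Fintype.card D - 1))
          * ((m:ℝ)^(Fintype.card D))⁻¹ := hkey
      _ ≤ (GoodS.card : ℝ) * p := by
          rw [hpeq]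
          exact mul_le_mul_of_nonneg_right hGc (by positivity)
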